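/- Let X, Y be Banach spaces, let U be an open subset of a Banach space Z, and let Λ̃ : U × X → Y be a real analytic map which is linear and continuous in the second variable. Then the map from U to the space L(X,Y) of bounded linear operators taking z to Λ̃(z,·) equals the partial Fréchet differential d_x Λ̃(z,x) (for any x), and is real analytic from U to L(X,Y). -/
import Mathlib


/-- If `Λ̃ : U × X → Y` is analytic and linear continuous in the second variable
(i.e. `Λ̃(z,·) = F z` for a family `F` of bounded linear operators), then the map
`z ↦ Λ̃(z,·) ∈ L(X,Y)` equals the partial Fréchet differential `d_x Λ̃(z,x)` for any `x`,
and is analytic from `U` to `L(X,Y)`. -/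
theorem analyticity_of_operator_valued_map
    {X Y Z : Type*} [NormedAddCommGroup X] [NormedSpace ℝ X] [CompleteSpace X]
    [NormedAddCommGroup Y] [NormedSpace ℝ Y] [CompleteSpace Y]
    [NormedAddCommGroup Z] [NormedSpace ℝ Z] [CompleteSpace Z]
    (U : Set Z) (hU : IsOpen U)
    (Λ : Z → X → Y) (F : Z → X →L[ℝ] Y)
    (hF : ∀ z x, F z x = Λ z x)
    (hA : AnalyticOn ℝ (fun p : Z × X => Λ p.1 p.2) (U ×ˢ (Set.univ : Set X))) :
    (∀ z ∈ U, ∀ x : X, F z = fderiv ℝ (fun x' => Λ z x') x) ∧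
      AnalyticOn ℝ F U := by
  have hΛF : ∀ z, (fun x' => Λ z x') = (F z : X → Y) :=
    fun z => funext fun x => (hF z x).symm
  constructor
  · intro z hz x
    rw [hΛF z, (F z).fderiv]
  · set G : Z × X → Y := fun p => Λ p.1 p.2 with hG
    have hopen : IsOpen (U ×ˢ (Set.univ : Set X)) := hU.prod isOpen_univ
    have hA' : AnalyticOnNhd ℝ G (U ×ˢ (Set.univ : Set X)) :=
      (hopen.analyticOn_iff_analyticOnNhd).mp hA
    have hD : AnalyticOnNhd ℝ (fderiv ℝ G) (U ×ˢ (Set.univ : Set X)) := hA'.fderiv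
    -- the candidate analytic map
    have hH : AnalyticOnNhd ℝ
        (fun z => ((ContinuousLinearMap.compL ℝ X (Z × X) Y).flip
          (ContinuousLinearMap.inr ℝ Z X)) (fderiv ℝ G (z, (0 : X)))) U := by
      have h1 : AnalyticOnNhd ℝ (fun z : Z => (z, (0 : X))) U :=
        (ContinuousLinearMap.inl ℝ Z X).analyticOnNhd U
      have h2 : AnalyticOnNhd ℝ (fun z : Z => fderiv ℝ G (z, (0 : X))) U := by
        have := hD.comp h1 (fun z hz => ⟨hz, trivial⟩)
        exact this
      exact (((ContinuousLinearMap.compL ℝ X (Z × X) Y).flip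
        (ContinuousLinearMap.inr ℝ Z X)).analyticOnNhd Set.univ).comp h2
        (Set.mapsTo_univ _ _)
    have key : Set.EqOn
        (fun z => ((ContinuousLinearMap.compL ℝ X (Z × X) Y).flip
          (ContinuousLinearMap.inr ℝ Z X)) (fderiv ℝ G (z, (0 : X)))) F U := by
      intro z hz
      have hdiff : HasFDerivAt G (fderiv ℝ G (z, (0 : X))) (z, (0 : X)) :=
        ((hA' (z, 0) ⟨hz, trivial⟩).differentiableAt).hasFDerivAt
      have h1 : HasFDerivAt (fun v : X => G (z, v))
          ((fderiv ℝ G (z, (0 : X))).comp (ContinuousLinearMap.inr ℝ Z X)) 0 :=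
        hdiff.comp 0 (hasFDerivAt_prodMk_right z (0 : X))
      have h2 : HasFDerivAt (fun v : X => G (z, v)) (F z) 0 := by
        have : (fun v : X => G (z, v)) = (F z : X → Y) := hΛF z
        rw [this]
        exact (F z).hasFDerivAt
      simpa using h1.unique h2
    exact ((hH.congr hU key).analyticOn)
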